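/- Let ρ(q^{-t}) = q^{t(r₁-r₂+t+1)} [n choose t, r₂-t, r₁-r₂+t, n-r₁-t]_q for t in I = {max(0,r₂-r₁) ≤ t ≤ min(r₂, n-r₁)} (and 0 otherwise). Then ∑_{t} ρ(q^{-t}) q^{-t} = [n choose r₁]_q [n choose r₂]_q. -/

import Mathlib

noncomputable def qPoch (q : ℚ) (k : ℕ) : ℚ := ∏ j ∈ Finset.range k, (1 - q ^ (j + 1))

noncomputable def qMultinom4 (q : ℚ) (n a b c d : ℕ) : ℚ :=
  qPoch q n / (qPoch q a * qPoch q b * qPoch q c * qPoch q d)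

noncomputable def gb (q : ℚ) : ℕ → ℕ → ℚ
  | 0, 0 => 1
  | 0, _ + 1 => 0
  | _ + 1, 0 => 1
  | n + 1, k + 1 => q ^ (k + 1) * gb q n (k + 1) + gb q n k

lemma gb_zero_right (q : ℚ) (n : ℕ) : gb q n 0 = 1 := by
  cases n <;> simp [gb]

lemma gb_eq_zero (q : ℚ) : ∀ n k : ℕ, n < k → gb q n k = 0 := by
  intro n
  induction n with
  | zero => intro k hk; match k, hk with | k + 1, _ => simp [gb]
  | succ n ih =>
    intro k hk
    match k, hk with
    | k + 1, hk =>
      simp only [gb]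
      rw [ih (k+1) (by omega), ih k (by omega)]
      ring

lemma qPoch_zero (q : ℚ) : qPoch q 0 = 1 := by simp [qPoch]

lemma qPoch_succ (q : ℚ) (k : ℕ) : qPoch q (k + 1) = qPoch q k * (1 - q ^ (k + 1)) := by
  simp [qPoch, Finset.prod_range_succ]

lemma qPoch_ne_zero (q : ℚ) (hq : 1 < q) (k : ℕ) : qPoch q k ≠ 0 := by
  have h : ∀ j ∈ Finset.range k, (1 - q ^ (j + 1)) ≠ 0 := by
    intro j _
    have : 1 < q ^ (j + 1) := one_lt_pow₀ hq (by omega)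
    linarith
  exact Finset.prod_ne_zero_iff.mpr h

lemma gb_mul (q : ℚ) : ∀ n k : ℕ, k ≤ n →
    gb q n k * (qPoch q k * qPoch q (n - k)) = qPoch q n := by
  intro n
  induction n with
  | zero =>
    intro k hk
    interval_cases k
    simp [gb, qPoch_zero]
  | succ n ih =>
    intro k hk
    match k with
    | 0 =>
      rw [gb_zero_right, qPoch_zero, Nat.sub_zero, one_mul, one_mul]
    | k + 1 =>
      rcases le_or_gt (k + 1) n with h | h
      · obtain ⟨a, rfl⟩ : ∃ a, n = k + 1 + a := ⟨n - (k+1), by omega⟩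
        have h1 := ih (k + 1) h
        have h2 := ih k (by omega)
        have e1 : k + 1 + a - (k + 1) = a := by omega
        have e2 : k + 1 + a - k = a + 1 := by omega
        have e3 : k + 1 + a + 1 - (k + 1) = a + 1 := by omega
        rw [e1] at h1
        rw [e2, qPoch_succ q a] at h2
        rw [qPoch_succ q k] at h1
        simp only [gb, e3]
        rw [qPoch_succ q (k + 1 + a), qPoch_succ q a, qPoch_succ q k]
        have hqn : q ^ (k + 1 + a + 1) = q ^ (k + 1) * q ^ (a + 1) := by
          rw [show k + 1 + a + 1 = (k + 1) + (a + 1) from by omega, pow_add]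
        rw [hqn]
        linear_combination q ^ (k+1) * (1 - q ^ (a+1)) * h1 + (1 - q ^ (k+1)) * h2
      · have hk' : k + 1 = n + 1 := by omega
        rw [hk', Nat.sub_self, qPoch_zero, mul_one]
        simp only [gb]
        rw [gb_eq_zero q n (n+1) (by omega)]
        have h1 := ih n le_rfl
        rw [Nat.sub_self, qPoch_zero, mul_one] at h1
        rw [qPoch_succ q n]
        linear_combination (1 - q ^ (n + 1)) * h1

lemma gb_eq (q : ℚ) (hq : 1 < q) (n k : ℕ) (hk : k ≤ n) :
    gb q n k = qPoch q n / (qPoch q k * qPoch q (n - k)) := by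
  rw [eq_div_iff (mul_ne_zero (qPoch_ne_zero q hq k) (qPoch_ne_zero q hq (n - k)))]
  exact gb_mul q n k hk

lemma gb_pascal (q : ℚ) (n k : ℕ) :
    gb q (n + 1) (k + 1) = q ^ (k + 1) * gb q n (k + 1) + gb q n k := rfl

lemma vdm (q : ℚ) (hq0 : q ≠ 0) : ∀ m n k : ℕ,
    ∑ j ∈ Finset.range (k + 1),
      q ^ ((j : ℤ) * ((m : ℤ) - (k : ℤ) + (j : ℤ))) * gb q m (k - j) * gb q n j
      = gb q (m + n) k := by
  intro m
  induction m with
  | zero =>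
    intro n k
    rw [Finset.sum_eq_single k]
    · simp [gb_zero_right]
    · intro j hj hjk
      have hj' : j < k := by simp at hj; omega
      rw [gb_eq_zero q 0 (k - j) (by omega)]
      ring
    · intro h; simp at h
  | succ m ih =>
    intro n k
    match k with
    | 0 =>
      simp [gb_zero_right]
    | k + 1 =>
      set f : ℕ → ℚ := fun j =>
        q ^ ((j : ℤ) * (((m+1 : ℕ) : ℤ) - ((k+1 : ℕ) : ℤ) + (j : ℤ))) * gb q (m+1) (k + 1 - j) * gb q n j with hf
      set g : ℕ → ℚ := fun j =>
        q ^ ((j : ℤ) * ((m : ℤ) - ((k+1 : ℕ) : ℤ) + (j : ℤ))) * gb q m (k + 1 - j) * gb q n j with hg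
      set h : ℕ → ℚ := fun j =>
        q ^ ((j : ℤ) * ((m : ℤ) - (k : ℤ) + (j : ℤ))) * gb q m (k - j) * gb q n j with hh
      have hsplit : ∀ j ∈ Finset.range (k + 1), f j = q ^ (k+1) * g j + h j := by
        intro j hj
        have hj' : j ≤ k := by simpa [Nat.lt_succ_iff] using hj
        have hsub : k + 1 - j = (k - j) + 1 := by omega
        have e1 : q ^ ((j : ℤ) * (((m+1 : ℕ) : ℤ) - ((k+1 : ℕ) : ℤ) + (j : ℤ))) * q ^ (k - j + 1)
            = q ^ (k+1) * q ^ ((j : ℤ) * ((m : ℤ) - ((k+1 : ℕ) : ℤ) + (j : ℤ))) := by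
          have hpow : q ^ (k - j + 1) = q ^ (((k : ℤ) - (j : ℤ) + 1)) := by
            rw [← zpow_natCast]; congr 1; omega
          rw [hpow, ← zpow_add₀ hq0, ← zpow_natCast q (k+1), ← zpow_add₀ hq0]
          congr 1
          push_cast
          ring
        have e2 : q ^ ((j : ℤ) * (((m+1 : ℕ) : ℤ) - ((k+1 : ℕ) : ℤ) + (j : ℤ)))
            = q ^ ((j : ℤ) * ((m : ℤ) - (k : ℤ) + (j : ℤ))) := by
          congr 1
          push_cast
          ring
        simp only [hf, hg, hh]
        rw [hsub, gb_pascal]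
        linear_combination gb q m (k - j + 1) * gb q n j * e1 + gb q m (k - j) * gb q n j * e2
      have hlast : f (k + 1) = q ^ (k+1) * g (k + 1) := by
        simp only [hf, hg]
        have h1 : k + 1 - (k + 1) = 0 := by omega
        rw [h1]
        simp only [gb_zero_right]
        have e1 : q ^ (((k+1 : ℕ) : ℤ) * (((m+1 : ℕ) : ℤ) - ((k+1 : ℕ) : ℤ) + ((k+1 : ℕ) : ℤ)))
            = q ^ (k+1) * q ^ (((k+1 : ℕ) : ℤ) * ((m : ℤ) - ((k+1 : ℕ) : ℤ) + ((k+1 : ℕ) : ℤ))) := by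
          rw [← zpow_natCast q (k+1), ← zpow_add₀ hq0]
          congr 1
          push_cast
          ring
        linear_combination gb q n (k + 1) * e1
      have key : ∑ j ∈ Finset.range (k + 1 + 1), f j
          = q ^ (k+1) * (∑ j ∈ Finset.range (k + 1 + 1), g j)
            + ∑ j ∈ Finset.range (k + 1), h j := by
        rw [Finset.sum_range_succ, Finset.sum_range_succ (f := g),
          Finset.sum_congr rfl hsplit, Finset.sum_add_distrib, hlast,
          mul_add, Finset.mul_sum]
        ring
      have hA : ∑ j ∈ Finset.range (k + 1 + 1), g j = gb q (m + n) (k + 1) := ih n (k + 1)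
      have hB : ∑ j ∈ Finset.range (k + 1), h j = gb q (m + n) k := ih n k
      calc ∑ j ∈ Finset.range (k + 1 + 1), f j
          = q ^ (k+1) * gb q (m + n) (k + 1) + gb q (m + n) k := by rw [key, hA, hB]
        _ = gb q (m + 1 + n) (k + 1) := by
            have e : m + 1 + n = (m + n) + 1 := by omega
            rw [e, gb_pascal]

/-- Summing `ρ(q^{-t}) q^{-t}` with
`ρ(q^{-t}) = q^{t(r₁-r₂+t+1)} [n choose t, r₂-t, r₁-r₂+t, n-r₁-t]_q` over the index set
`I = {max(0, r₂-r₁) ≤ t ≤ min(r₂, n-r₁)}` gives `[n choose r₁]_q [n choose r₂]_q`. -/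
theorem rho_sum (q : ℚ) (hq : 1 < q) (n r₁ r₂ : ℕ) (hr₁ : r₁ ≤ n) (hr₂ : r₂ ≤ n) :
    ∑ t ∈ Finset.Icc (max 0 (r₂ - r₁)) (min r₂ (n - r₁)),
        q ^ ((t : ℤ) * ((r₁ : ℤ) - r₂ + t + 1)) *
          qMultinom4 q n t (r₂ - t) (r₁ + t - r₂) (n - r₁ - t) * q ^ (-(t : ℤ)) =
      (qPoch q n / (qPoch q r₁ * qPoch q (n - r₁))) *
        (qPoch q n / (qPoch q r₂ * qPoch q (n - r₂))) := by
  have hq0 : q ≠ 0 := by positivity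
  have hP := qPoch_ne_zero q hq
  have hmax : max 0 (r₂ - r₁) = r₂ - r₁ := by omega
  rw [hmax]
  set F : ℕ → ℚ := fun t =>
    q ^ ((t : ℤ) * ((r₁ : ℤ) - (r₂ : ℤ) + (t : ℤ))) * gb q r₁ (r₂ - t) * gb q (n - r₁) t with hF
  have step1 : ∀ t ∈ Finset.Icc (r₂ - r₁) (min r₂ (n - r₁)),
      q ^ ((t : ℤ) * ((r₁ : ℤ) - r₂ + t + 1)) *
          qMultinom4 q n t (r₂ - t) (r₁ + t - r₂) (n - r₁ - t) * q ^ (-(t : ℤ))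
        = gb q n r₁ * F t := by
    intro t ht
    simp only [Finset.mem_Icc] at ht
    have ht2 : t ≤ r₂ := by omega
    have ht3 : t ≤ n - r₁ := by omega
    have hE : q ^ ((t : ℤ) * ((r₁ : ℤ) - r₂ + t + 1)) * q ^ (-(t : ℤ))
        = q ^ ((t : ℤ) * ((r₁ : ℤ) - (r₂ : ℤ) + (t : ℤ))) := by
      rw [← zpow_add₀ hq0]
      congr 1
      ring
    rw [mul_right_comm, hE]
    simp only [hF]
    rw [gb_eq q hq n r₁ hr₁, gb_eq q hq r₁ (r₂ - t) (by omega),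
      gb_eq q hq (n - r₁) t ht3, show r₁ - (r₂ - t) = r₁ + t - r₂ from by omega,
      show n - r₁ - t = n - r₁ - t from rfl]
    simp only [qMultinom4]
    field_simp [hP]
  rw [Finset.sum_congr rfl step1, ← Finset.mul_sum]
  have hsub : Finset.Icc (r₂ - r₁) (min r₂ (n - r₁)) ⊆ Finset.range (r₂ + 1) := by
    intro t ht
    simp only [Finset.mem_Icc] at ht
    simp only [Finset.mem_range]
    omega
  have hvan : ∀ t ∈ Finset.range (r₂ + 1),
      t ∉ Finset.Icc (r₂ - r₁) (min r₂ (n - r₁)) → F t = 0 := by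
    intro t ht hnot
    simp only [Finset.mem_range] at ht
    simp only [Finset.mem_Icc, not_and_or, not_le] at hnot
    simp only [hF]
    rcases lt_or_ge r₁ (r₂ - t) with hlt | hle
    · rw [gb_eq_zero q r₁ (r₂ - t) hlt]
      ring
    · have : n - r₁ < t := by omega
      rw [gb_eq_zero q (n - r₁) t this]
      ring
  rw [Finset.sum_subset hsub hvan]
  have hv := vdm q hq0 r₁ (n - r₁) r₂
  simp only [hF]
  rw [hv, show r₁ + (n - r₁) = n from by omega]
  rw [gb_eq q hq n r₁ hr₁, gb_eq q hq n r₂ hr₂]
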